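/- Factorized form of the $U(1)$ two-fermion matrix element: for positive half-integers $p,q$ and $\nu\ne0$, $\sum_{n=0}^{q-1/2}\frac{(-\nu)_n}{n!}\frac{(\nu)_{p+q-n}}{(p+q-n)!} = -\frac{1}{\nu(p+q)}\frac{(\nu)_{p+1/2}(-\nu)_{q+1/2}}{(p-1/2)!\,(q-1/2)!}$. -/
import Mathlib


open Finset

/-- Pochhammer symbol. -/
noncomputable def poch (x : ℂ) (m : ℕ) : ℂ := (ascPochhammer ℂ m).eval x

lemma poch_zero' (x : ℂ) : poch x 0 = 1 := by simp [poch]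

lemma poch_succ' (x : ℂ) (m : ℕ) : poch x (m + 1) = poch x m * (x + m) := by
  simp [poch, ascPochhammer_succ_right]

lemma u1_aux (ν P Q A B x y : ℂ) (hν : ν ≠ 0) (hA : A ≠ 0) (hB : B ≠ 0)
    (hx : x ≠ 0) (hy : y ≠ 0) (hxy : x + y ≠ 0) :
    -(1 / (ν * (x + y))) * (P * (ν + x) * Q / (x * A * B)) + Q / (y * B) * (P / (x * A))
      = -(1 / (ν * (x + y))) * (P * (Q * (y - ν)) / (A * (y * B))) := by
  have d1 : ν * (x + y) * (x * A * B) ≠ 0 := by apply_rules [mul_ne_zero]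
  have d2 : y * B * (x * A) ≠ 0 := by apply_rules [mul_ne_zero]
  have d3 : ν * (x + y) * (A * (y * B)) ≠ 0 := by apply_rules [mul_ne_zero]
  have e1 : -(1 / (ν * (x + y))) * (P * (ν + x) * Q / (x * A * B))
      = (-(P * (ν + x) * Q)) / (ν * (x + y) * (x * A * B)) := by
    rw [neg_mul, div_mul_div_comm, one_mul]; exact (neg_div _ _).symm
  have e2 : Q / (y * B) * (P / (x * A)) = (Q * P) / (y * B * (x * A)) := div_mul_div_comm _ _ _ _
  have e3 : -(1 / (ν * (x + y))) * (P * (Q * (y - ν)) / (A * (y * B)))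
      = (-(P * (Q * (y - ν)))) / (ν * (x + y) * (A * (y * B))) := by
    rw [neg_mul, div_mul_div_comm, one_mul]; exact (neg_div _ _).symm
  rw [e1, e2, e3, div_add_div _ _ d1 d2, div_eq_div_iff (mul_ne_zero d1 d2) d3]
  ring

lemma u1_aux0 (ν P A x : ℂ) (hν : ν ≠ 0) (hA : A ≠ 0) (hx : x ≠ 0) :
    P / (x * A) = -(1 / (ν * x)) * (P * -ν / (A * 1)) := by
  have d1 : x * A ≠ 0 := mul_ne_zero hx hA
  have d3 : ν * x * (A * 1) ≠ 0 := by apply_rules [mul_ne_zero, one_ne_zero]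
  have e3 : -(1 / (ν * x)) * (P * -ν / (A * 1)) = (-(P * -ν)) / (ν * x * (A * 1)) := by
    rw [neg_mul, div_mul_div_comm, one_mul]; exact (neg_div _ _).symm
  rw [e3, div_eq_div_iff d1 d3]
  ring

/-- Factorized form of the `U(1)` two-fermion matrix element: for positive half-integers
`p = a + 1/2`, `q = b + 1/2` (`a, b ∈ ℕ`) and `ν ≠ 0`,
`∑_{n=0}^{q-1/2} (-ν)_n/n! ⋅ (ν)_{p+q-n}/(p+q-n)!
  = -(1/(ν(p+q))) (ν)_{p+1/2}(-ν)_{q+1/2} / ((p-1/2)!(q-1/2)!)`, i.e.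
`∑_{n=0}^{b} (-ν)_n/n! ⋅ (ν)_{a+b+1-n}/(a+b+1-n)!
  = -(1/(ν(a+b+1))) (ν)_{a+1}(-ν)_{b+1}/(a! b!)`. -/
theorem u1_matrix_element_factorized (ν : ℂ) (hν : ν ≠ 0) (a b : ℕ) :
    ∑ n ∈ Finset.range (b + 1),
        poch (-ν) n / (Nat.factorial n : ℂ) *
          (poch ν (a + b + 1 - n) / (Nat.factorial (a + b + 1 - n) : ℂ))
      = -(1 / (ν * ((a : ℂ) + b + 1))) *
          (poch ν (a + 1) * poch (-ν) (b + 1) /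
            ((Nat.factorial a : ℂ) * (Nat.factorial b : ℂ))) := by
  induction b generalizing a with
  | zero =>
    have ha : (Nat.factorial a : ℂ) ≠ 0 := Nat.cast_ne_zero.mpr (Nat.factorial_ne_zero a)
    have ha1 : ((a : ℂ) + 1) ≠ 0 := by
      have h : ((a + 1 : ℕ) : ℂ) ≠ 0 := Nat.cast_ne_zero.mpr (by omega)
      intro hc; exact h (by push_cast; linear_combination hc)
    rw [Finset.sum_range_one]
    rw [show a + 0 + 1 - 0 = a + 1 from rfl]
    rw [poch_zero', poch_succ' (-ν) 0, poch_zero', Nat.factorial_succ, Nat.factorial_zero]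
    push_cast
    have key := u1_aux0 ν (poch ν (a + 1)) (Nat.factorial a : ℂ) ((a : ℂ) + 1) hν ha ha1
    rw [one_mul]
    linear_combination key
  | succ b ih =>
    rw [Finset.sum_range_succ]
    simp only [show a + (b + 1) + 1 = (a + 1) + b + 1 from by omega]
    rw [ih (a + 1)]
    rw [show a + 1 + b + 1 - (b + 1) = a + 1 from by omega]
    have ha : (Nat.factorial a : ℂ) ≠ 0 := Nat.cast_ne_zero.mpr (Nat.factorial_ne_zero a)
    have hb : (Nat.factorial b : ℂ) ≠ 0 := Nat.cast_ne_zero.mpr (Nat.factorial_ne_zero b)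
    have ha1 : ((a : ℂ) + 1) ≠ 0 := by
      have h : ((a + 1 : ℕ) : ℂ) ≠ 0 := Nat.cast_ne_zero.mpr (by omega)
      intro hc; exact h (by push_cast; linear_combination hc)
    have hb1 : ((b : ℂ) + 1) ≠ 0 := by
      have h : ((b + 1 : ℕ) : ℂ) ≠ 0 := Nat.cast_ne_zero.mpr (by omega)
      intro hc; exact h (by push_cast; linear_combination hc)
    have h1 : ((a : ℂ) + 1 + ((b : ℂ) + 1)) ≠ 0 := by
      have h : ((a + 1 + (b + 1) : ℕ) : ℂ) ≠ 0 := Nat.cast_ne_zero.mpr (by omega)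
      intro hc; exact h (by push_cast; linear_combination hc)
    rw [poch_succ' ν (a + 1), poch_succ' (-ν) (b + 1), Nat.factorial_succ a,
      Nat.factorial_succ b]
    push_cast
    have key := u1_aux ν (poch ν (a + 1)) (poch (-ν) (b + 1)) (Nat.factorial a : ℂ)
      (Nat.factorial b : ℂ) ((a : ℂ) + 1) ((b : ℂ) + 1) hν ha hb ha1 hb1 h1
    linear_combination key
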